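/- Let Σ = (X, 𝒟, φ) be a system and let A ⊆ X be a bounded nonempty invariant set. If A is uniformly globally attractive and Lagrange stable, then A is practically uniformly globally asymptotically stable; in particular Σ is pUGAS. -/

import Mathlib

open scoped NNReal ENNReal
open Filter Topology Bornology

noncomputable section

/-- Functions of class 𝒦: continuous, strictly increasing, vanishing at zero. -/
def ClassK (γ : ℝ≥0 → ℝ≥0) : Prop :=
  Continuous γ ∧ StrictMono γ ∧ γ 0 = 0

/-- Functions of class 𝒦∞: class 𝒦 and unbounded. -/
def ClassKinf (γ : ℝ≥0 → ℝ≥0) : Prop :=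
  ClassK γ ∧ ∀ M : ℝ≥0, ∃ r : ℝ≥0, M < γ r

/-- Functions of class 𝒦ℒ. -/
def ClassKL (β : ℝ≥0 → ℝ≥0 → ℝ≥0) : Prop :=
  Continuous (fun p : ℝ≥0 × ℝ≥0 => β p.1 p.2) ∧
  (∀ t : ℝ≥0, ClassK fun r => β r t) ∧
  ∀ r : ℝ≥0, 0 < r →
    StrictAnti (fun t => β r t) ∧ Tendsto (fun t => β r t) atTop (𝓝 0)

/-- Distance of a point to a set, `‖x‖_A`. -/
def dA {X : Type*} [NormedAddCommGroup X] (A : Set X) (x : X) : ℝ≥0 :=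
  (Metric.infDist x A).toNNReal

/-- The open ε-neighborhood `B_ε(A)` of a set. -/
def ballSet {X : Type*} [NormedAddCommGroup X] (ε : ℝ≥0) (A : Set X) : Set X :=
  {x | dA A x < ε}

/-- A (time-invariant) control system with disturbances. -/
structure System (X : Type*) [NormedAddCommGroup X] [NormedSpace ℝ X]
    (W : Type*) [NormedAddCommGroup W] [NormedSpace ℝ W] where
  /-- the set of disturbance values -/
  D : Set W
  D_nonempty : D.Nonempty
  /-- the space of disturbances -/
  Dist : Set (ℝ≥0 → W)
  dist_mem : ∀ d ∈ Dist, ∀ t : ℝ≥0, d t ∈ D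
  /-- axiom of shift invariance -/
  shift_invariant : ∀ d ∈ Dist, ∀ τ : ℝ≥0, (fun t => d (t + τ)) ∈ Dist
  /-- axiom of concatenation -/
  concat_mem : ∀ d₁ ∈ Dist, ∀ d₂ ∈ Dist, ∀ t : ℝ≥0, 0 < t →
      (fun s => if s ≤ t then d₁ s else d₂ (s - t)) ∈ Dist
  /-- the transition map -/
  φ : ℝ≥0 → X → (ℝ≥0 → W) → X
  identity : ∀ (x : X), ∀ d ∈ Dist, φ 0 x d = x
  causality : ∀ (t : ℝ≥0) (x : X), ∀ d ∈ Dist, ∀ d' ∈ Dist,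
      (∀ s ≤ t, d s = d' s) → φ t x d = φ t x d'
  cont : ∀ (x : X), ∀ d ∈ Dist, Continuous fun t : ℝ≥0 => φ t x d
  cocycle : ∀ (t h : ℝ≥0) (x : X), ∀ d ∈ Dist,
      φ h (φ t x d) (fun s => d (t + s)) = φ (t + h) x d

namespace System

variable {X : Type*} [NormedAddCommGroup X] [NormedSpace ℝ X]
variable {W : Type*} [NormedAddCommGroup W] [NormedSpace ℝ W]
variable (S : System X W)

/-- Reachability set within time `T`. -/
def RT (T : ℝ≥0) (B : Set X) : Set X :=
  {y | ∃ t ≤ T, ∃ d ∈ S.Dist, ∃ x ∈ B, y = S.φ t x d}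

/-- Reachability set. -/
def R (B : Set X) : Set X :=
  {y | ∃ t : ℝ≥0, ∃ d ∈ S.Dist, ∃ x ∈ B, y = S.φ t x d}

/-- Robust forward completeness. -/
def RFC : Prop :=
  ∀ C : ℝ≥0, 0 < C → ∀ τ : ℝ≥0, 0 < τ →
    IsBounded (S.RT τ {x : X | ‖x‖₊ ≤ C})

/-- Invariance of a set. -/
def Invariant (A : Set X) : Prop := S.R A ⊆ A

/-- Robust invariance of a set. -/
def RobustlyInvariant (A : Set X) : Prop :=
  S.Invariant A ∧
  ∀ ε : ℝ≥0, 0 < ε → ∀ h : ℝ≥0, 0 < h → ∃ δ : ℝ≥0, 0 < δ ∧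
    ∀ t : ℝ≥0, t ≤ h → ∀ x : X, dA A x ≤ δ → ∀ d ∈ S.Dist, dA A (S.φ t x d) ≤ ε

/-- Lagrange stability of a set. -/
def LagrangeStable (A : Set X) : Prop :=
  ∃ σ : ℝ≥0 → ℝ≥0, ClassKinf σ ∧ ∃ c : ℝ≥0, 0 < c ∧
    ∀ (x : X), ∀ d ∈ S.Dist, ∀ t : ℝ≥0, dA A (S.φ t x d) ≤ σ (dA A x) + c

/-- Uniform (local) stability of a set. -/
def ULS (A : Set X) : Prop :=
  ∀ ε : ℝ≥0, 0 < ε → ∃ δ : ℝ≥0, 0 < δ ∧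
    ∀ x : X, dA A x ≤ δ → ∀ d ∈ S.Dist, ∀ t : ℝ≥0, dA A (S.φ t x d) ≤ ε

/-- Uniform global stability of a set. -/
def UGS (A : Set X) : Prop :=
  ∃ σ : ℝ≥0 → ℝ≥0, ClassKinf σ ∧
    ∀ (x : X), ∀ d ∈ S.Dist, ∀ t : ℝ≥0, dA A (S.φ t x d) ≤ σ (dA A x)

/-- Uniform global asymptotic stability of a set. -/
def UGAS (A : Set X) : Prop :=
  ∃ β : ℝ≥0 → ℝ≥0 → ℝ≥0, ClassKL β ∧
    ∀ (x : X), ∀ d ∈ S.Dist, ∀ t : ℝ≥0, dA A (S.φ t x d) ≤ β (dA A x) t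

/-- Practical uniform global asymptotic stability of a set. -/
def PUGASSet (A : Set X) : Prop :=
  ∃ β : ℝ≥0 → ℝ≥0 → ℝ≥0, ClassKL β ∧ ∃ c : ℝ≥0, 0 < c ∧
    ∀ (x : X), ∀ d ∈ S.Dist, ∀ t : ℝ≥0, dA A (S.φ t x d) ≤ β (dA A x) t + c

/-- Global weak attractivity of a set. -/
def GWA (A : Set X) : Prop :=
  ∀ (x : X), ∀ d ∈ S.Dist, ∀ ε : ℝ≥0, 0 < ε → ∃ t : ℝ≥0, dA A (S.φ t x d) ≤ ε

/-- Uniform global weak attractivity of a set. -/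
def UGWA (A : Set X) : Prop :=
  ∀ ε : ℝ≥0, 0 < ε → ∀ r : ℝ≥0, 0 < r → ∃ τ : ℝ≥0,
    ∀ x : X, dA A x ≤ r → ∀ d ∈ S.Dist, ∃ t ≤ τ, dA A (S.φ t x d) ≤ ε

/-- Uniform global attractivity of a set. -/
def UGATT (A : Set X) : Prop :=
  ∀ ε : ℝ≥0, 0 < ε → ∀ r : ℝ≥0, 0 < r → ∃ τ : ℝ≥0,
    ∀ x : X, dA A x ≤ r → ∀ d ∈ S.Dist, ∀ t : ℝ≥0, τ ≤ t → dA A (S.φ t x d) ≤ ε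

/-- Uniform ultimate boundedness of the system. -/
def UUB : Prop :=
  ∃ K : ℝ≥0, 0 < K ∧ ∀ r : ℝ≥0, 0 < r → ∃ T : ℝ≥0,
    ∀ x : X, ‖x‖₊ ≤ r → ∀ d ∈ S.Dist, ∀ t : ℝ≥0, T ≤ t → ‖S.φ t x d‖₊ ≤ K

/-- Global recurrence of a set. -/
def GloballyRecurrent (A : Set X) : Prop :=
  ∀ (x : X), ∀ d ∈ S.Dist, ∃ t : ℝ≥0, S.φ t x d ∈ A

/-- Uniform global recurrence of a set. -/
def UniformlyGloballyRecurrent (A : Set X) : Prop :=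
  ∀ R : ℝ≥0, 0 < R → ∃ τ : ℝ≥0,
    ∀ x : X, dA A x ≤ R → ∀ d ∈ S.Dist, ∃ t ≤ τ, S.φ t x d ∈ A

/-- The set `P₊(A) = ⋂_{ε>0} ℛ(B_ε(A))`. -/
def Pplus (A : Set X) : Set X := ⋂ (ε : ℝ≥0) (_ : 0 < ε), S.R (ballSet ε A)

/-- Non-coercive Lyapunov function w.r.t. a bounded set `A`. -/
def NonCoerciveLyapunov (A : Set X) (V : X → ℝ) : Prop :=
  Continuous V ∧ (∀ x : X, 0 ≤ V x) ∧ (∀ x ∈ A, V x = 0) ∧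
  (∃ ψ₂ : ℝ≥0 → ℝ≥0, ClassKinf ψ₂ ∧
    ∀ x ∉ A, 0 < V x ∧ V x ≤ (ψ₂ (dA A x) : ℝ)) ∧
  (∃ α : ℝ≥0 → ℝ≥0, ClassK α ∧ ∀ x ∉ A, ∀ d ∈ S.Dist,
    Filter.liminf (fun t : ℝ≥0 => (V (S.φ t x d) - V x) / (t : ℝ))
      (𝓝[>] (0 : ℝ≥0)) ≤ -(α (dA A x) : ℝ))

/-- The system is Lagrange stable if some bounded nonempty set is Lagrange stable. -/
def SystemLagrangeStable : Prop :=
  ∃ A : Set X, A.Nonempty ∧ IsBounded A ∧ S.LagrangeStable A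

/-- The system is pUGAS if some bounded nonempty set is pUGAS. -/
def SystemPUGAS : Prop :=
  ∃ A : Set X, A.Nonempty ∧ IsBounded A ∧ S.PUGASSet A

end System

section Stmt9Aux

open Filter

/-- Piecewise-linear continuous monotone majorant of `n ↦ a ⌈r⌉₊`. -/
def interpL (a : ℕ → ℝ≥0) (r : ℝ≥0) : ℝ≥0 :=
  a 1 + 1 + r + ∑' n : ℕ, (a (n + 2) - a (n + 1)) * min 1 (r - (n : ℝ≥0))

lemma interp_term_zero (a : ℕ → ℝ≥0) {r : ℝ≥0} {n : ℕ} (h : r ≤ (n : ℝ≥0)) :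
    (a (n + 2) - a (n + 1)) * min 1 (r - (n : ℝ≥0)) = 0 := by
  rw [tsub_eq_zero_of_le h, min_eq_right (zero_le_one), mul_zero]

lemma interp_summable (a : ℕ → ℝ≥0) (r : ℝ≥0) :
    Summable (fun n : ℕ => (a (n + 2) - a (n + 1)) * min 1 (r - (n : ℝ≥0))) := by
  apply summable_of_ne_finset_zero (s := Finset.range ⌈r⌉₊)
  intro n hn
  apply interp_term_zero
  have hn' : ⌈r⌉₊ ≤ n := by simpa using hn
  exact le_trans (Nat.le_ceil r) (by exact_mod_cast Nat.cast_le.mpr hn')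

lemma interpL_continuous (a : ℕ → ℝ≥0) : Continuous (interpL a) := by
  rw [continuous_iff_continuousAt]
  intro r0
  set N : ℕ := ⌈r0⌉₊ + 1 with hN
  have hcont : ContinuousAt (fun r : ℝ≥0 =>
      a 1 + 1 + r + ∑ n ∈ Finset.range N, (a (n + 2) - a (n + 1)) * min 1 (r - (n : ℝ≥0))) r0 := by
    apply Continuous.continuousAt
    apply Continuous.add
    · exact (continuous_const.add continuous_id)
    · apply continuous_finset_sum
      intro n _
      exact continuous_const.mul (continuous_const.min (continuous_id.sub continuous_const))
  apply hcont.congr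
  have hmem : {r : ℝ≥0 | r < (N : ℝ≥0)} ∈ nhds r0 := by
    apply IsOpen.mem_nhds
    · exact isOpen_lt continuous_id continuous_const
    · simp only [Set.mem_setOf_eq, hN]
      calc r0 ≤ (⌈r0⌉₊ : ℝ≥0) := Nat.le_ceil r0
        _ < ((⌈r0⌉₊ + 1 : ℕ) : ℝ≥0) := by exact_mod_cast Nat.lt_succ_self _
  filter_upwards [hmem] with r hr
  have hts : (∑' n : ℕ, (a (n + 2) - a (n + 1)) * min 1 (r - (n : ℝ≥0)))
      = ∑ n ∈ Finset.range N, (a (n + 2) - a (n + 1)) * min 1 (r - (n : ℝ≥0)) := by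
    refine tsum_eq_sum ?_
    intro n hn
    apply interp_term_zero
    have hn' : N ≤ n := by simpa using hn
    exact le_trans hr.le (by exact_mod_cast Nat.cast_le.mpr hn')
  unfold interpL
  rw [hts]

lemma interpL_monotone (a : ℕ → ℝ≥0) : Monotone (interpL a) := by
  intro r1 r2 h
  unfold interpL
  apply add_le_add (add_le_add_right h _)
  refine Summable.tsum_le_tsum ?_ (interp_summable a r1) (interp_summable a r2)
  intro n
  exact mul_le_mul_right (min_le_min le_rfl (tsub_le_tsub_right h _)) _

lemma interpL_one_le (a : ℕ → ℝ≥0) (r : ℝ≥0) : 1 ≤ interpL a r := by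
  unfold interpL
  calc (1 : ℝ≥0) ≤ a 1 + 1 := le_add_self
    _ ≤ a 1 + 1 + r + _ := by
        exact le_trans (le_add_right le_rfl) (le_add_right le_rfl)

lemma interp_telescope (a : ℕ → ℝ≥0) (ha : Monotone a) (k : ℕ) :
    ∑ n ∈ Finset.range k, (a (n + 2) - a (n + 1)) = a (k + 1) - a 1 := by
  induction k with
  | zero => simp
  | succ k ih =>
      rw [Finset.sum_range_succ, ih, add_comm]
      exact tsub_add_tsub_cancel (ha (by omega)) (ha (by omega))

lemma interpL_ge (a : ℕ → ℝ≥0) (ha : Monotone a) (r : ℝ≥0) :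
    a ⌈r⌉₊ ≤ interpL a r := by
  set m : ℕ := ⌈r⌉₊ with hm
  have hbase : a 1 ≤ interpL a r := by
    unfold interpL
    exact le_trans (le_add_right le_rfl)
      (le_trans (le_add_right le_rfl) (le_add_right le_rfl))
  rcases le_or_gt m 1 with h1 | h1
  · exact le_trans (ha h1) hbase
  · -- m ≥ 2, so r > m - 1 ≥ 1
    have hrm : ((m - 1 : ℕ) : ℝ≥0) < r := by
      by_contra hcon
      push_neg at hcon
      have := Nat.ceil_le.mpr hcon
      omega
    have hmin : ∀ n ∈ Finset.range (m - 1),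
        (a (n + 2) - a (n + 1)) * min 1 (r - (n : ℝ≥0)) = a (n + 2) - a (n + 1) := by
      intro n hn
      have hn' : n + 1 ≤ m - 1 := by
        have := Finset.mem_range.mp hn; omega
      have hcast : ((n : ℝ≥0) + 1) ≤ ((m - 1 : ℕ) : ℝ≥0) := by
        exact_mod_cast Nat.cast_le.mpr hn'
      have hle : (n : ℝ≥0) + 1 ≤ r := le_trans hcast hrm.le
      have h1le : (1 : ℝ≥0) ≤ r - (n : ℝ≥0) := by
        rw [le_tsub_iff_right (le_trans le_self_add hle : (n : ℝ≥0) ≤ r)]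
        simpa [add_comm] using hle
      rw [min_eq_left h1le, mul_one]
    have hsum : a m - a 1 ≤ ∑' n : ℕ, (a (n + 2) - a (n + 1)) * min 1 (r - (n : ℝ≥0)) := by
      have := Summable.sum_le_tsum (Finset.range (m - 1))
        (fun n _ => zero_le) (interp_summable a r)
      calc a m - a 1 = a ((m - 1) + 1) - a 1 := by rw [Nat.sub_add_cancel h1.le]
        _ = ∑ n ∈ Finset.range (m - 1), (a (n + 2) - a (n + 1)) := (interp_telescope a ha _).symm
        _ = ∑ n ∈ Finset.range (m - 1), (a (n + 2) - a (n + 1)) * min 1 (r - (n : ℝ≥0)) :=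
            (Finset.sum_congr rfl hmin).symm
        _ ≤ _ := this
    calc a m = a 1 + (a m - a 1) := (add_tsub_cancel_of_le (ha (by omega))).symm
      _ ≤ a 1 + (1 + r + ∑' n : ℕ, (a (n + 2) - a (n + 1)) * min 1 (r - (n : ℝ≥0))) := by
          apply add_le_add_right
          exact le_trans hsum (le_add_self)
      _ = interpL a r := by unfold interpL; ring

/-- The constructed `𝒦ℒ` bound. -/
lemma classKL_construct (σ : ℝ≥0 → ℝ≥0) (hσ : ClassKinf σ) (L : ℝ≥0 → ℝ≥0)
    (hLc : Continuous L) (hLm : Monotone L) (hL1 : ∀ r, 1 ≤ L r) :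
    ClassKL (fun r t => 2 * (σ r + r) * (L r * (L r + t)⁻¹)) := by
  obtain ⟨⟨hσc, hσm, hσ0⟩, _⟩ := hσ
  have hLpos : ∀ r, (0 : ℝ≥0) < L r := fun r => lt_of_lt_of_le one_pos (hL1 r)
  have hdenpos : ∀ r t, (0 : ℝ≥0) < L r + t := fun r t =>
    lt_of_lt_of_le (hLpos r) le_self_add
  have hinvcont : Continuous fun p : ℝ≥0 × ℝ≥0 => (L p.1 + p.2)⁻¹ := by
    rw [continuous_iff_continuousAt]
    intro p
    exact (((hLc.comp continuous_fst).add continuous_snd).continuousAt).inv₀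
      (hdenpos p.1 p.2).ne'
  have hjoint : Continuous fun p : ℝ≥0 × ℝ≥0 =>
      2 * (σ p.1 + p.1) * (L p.1 * (L p.1 + p.2)⁻¹) := by
    exact (continuous_const.mul ((hσc.comp continuous_fst).add continuous_fst)).mul
      ((hLc.comp continuous_fst).mul hinvcont)
  refine ⟨hjoint, ?_, ?_⟩
  · intro t
    refine ⟨hjoint.comp (continuous_id.prodMk continuous_const), ?_, by simp [hσ0]⟩
    intro r1 r2 h
    have hA : 2 * (σ r1 + r1) < 2 * (σ r2 + r2) :=
      mul_lt_mul_of_pos_left (add_lt_add (hσm h) h) two_pos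
    have hB : L r1 * (L r1 + t)⁻¹ ≤ L r2 * (L r2 + t)⁻¹ := by
      rw [← div_eq_mul_inv, ← div_eq_mul_inv,
        div_le_div_iff₀ (hdenpos r1 t) (hdenpos r2 t)]
      calc L r1 * (L r2 + t) = L r1 * L r2 + L r1 * t := by ring
        _ ≤ L r1 * L r2 + L r2 * t := by
            exact add_le_add_right (mul_le_mul_left (hLm h.le) t) _
        _ = L r2 * (L r1 + t) := by ring
    have hB2 : (0 : ℝ≥0) < L r2 * (L r2 + t)⁻¹ :=
      mul_pos (hLpos r2) (inv_pos.mpr (hdenpos r2 t))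
    calc 2 * (σ r1 + r1) * (L r1 * (L r1 + t)⁻¹)
        ≤ 2 * (σ r1 + r1) * (L r2 * (L r2 + t)⁻¹) := mul_le_mul_right hB _
      _ < 2 * (σ r2 + r2) * (L r2 * (L r2 + t)⁻¹) := mul_lt_mul_of_pos_right hA hB2
  · intro r hr
    have hCpos : (0 : ℝ≥0) < 2 * (σ r + r) :=
      mul_pos two_pos (lt_of_lt_of_le hr le_add_self)
    constructor
    · intro t1 t2 h
      simp only
      have hinv : (L r + t2)⁻¹ < (L r + t1)⁻¹ :=
        inv_strictAnti₀ (hdenpos r t1) (add_lt_add_right h _)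
      exact mul_lt_mul_of_pos_left
        (mul_lt_mul_of_pos_left hinv (hLpos r)) hCpos
    · have hinner : Tendsto (fun t : ℝ≥0 => (L r + t)⁻¹) atTop (nhds 0) := by
        rw [tendsto_order]
        constructor
        · intro a ha
          exact absurd ha (not_lt.mpr (zero_le : (0:ℝ≥0) ≤ a))
        · intro ε hε
          rw [eventually_atTop]
          refine ⟨ε⁻¹ + 1, fun t ht => ?_⟩
          have hlt : ε⁻¹ < L r + t :=
            lt_of_lt_of_le (lt_of_lt_of_le (lt_add_of_pos_right _ one_pos) ht) le_add_self
          calc (L r + t)⁻¹ < (ε⁻¹)⁻¹ := inv_strictAnti₀ (inv_pos.mpr hε) hlt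
            _ = ε := inv_inv ε
      have := hinner.const_mul (2 * (σ r + r) * L r)
      rw [mul_zero] at this
      refine this.congr fun t => by ring
lemma beta_ge_sigma (σ : ℝ≥0 → ℝ≥0) (L : ℝ≥0 → ℝ≥0) (hL1 : ∀ r, 1 ≤ L r)
    {r t : ℝ≥0} (ht : t ≤ L r) :
    σ r ≤ 2 * (σ r + r) * (L r * (L r + t)⁻¹) := by
  have hLpos : (0 : ℝ≥0) < L r := lt_of_lt_of_le one_pos (hL1 r)
  have hden : L r + t ≤ 2 * L r := by
    rw [two_mul]; exact add_le_add_right ht _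
  have hinv : (2 * L r)⁻¹ ≤ (L r + t)⁻¹ :=
    inv_anti₀ (lt_of_lt_of_le hLpos le_self_add) hden
  have hhalf : (2 : ℝ≥0)⁻¹ ≤ L r * (L r + t)⁻¹ := by
    calc (2 : ℝ≥0)⁻¹ = L r * (2 * L r)⁻¹ := by
          rw [mul_inv, ← mul_assoc, mul_comm (L r) (2:ℝ≥0)⁻¹, mul_assoc,
            mul_inv_cancel₀ hLpos.ne', mul_one]
      _ ≤ L r * (L r + t)⁻¹ := mul_le_mul_right hinv _
  calc σ r ≤ σ r + r := le_add_self.trans (by rw [add_comm])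
    _ = 2 * (σ r + r) * 2⁻¹ := by
        rw [mul_comm (2:ℝ≥0) (σ r + r), mul_assoc, mul_inv_cancel₀ two_ne_zero, mul_one]
    _ ≤ 2 * (σ r + r) * (L r * (L r + t)⁻¹) := mul_le_mul_right hhalf _

end Stmt9Aux

/-- a bounded invariant UGATT Lagrange stable set is pUGAS. -/
theorem stmt9 {X : Type*} [NormedAddCommGroup X] [NormedSpace ℝ X]
    {W : Type*} [NormedAddCommGroup W] [NormedSpace ℝ W] (S : System X W) (A : Set X) (hA : A.Nonempty) (hAb : IsBounded A)
    (hinv : S.Invariant A) (hatt : S.UGATT A) (hlag : S.LagrangeStable A) :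
    S.PUGASSet A ∧ S.SystemPUGAS := by
  obtain ⟨σ, hσ, c, hc, hbound⟩ := hlag
  choose τ hτ using fun n : ℕ => hatt c hc ((n : ℝ≥0) + 1) (by positivity)
  set a : ℕ → ℝ≥0 := fun n => (Finset.range (n + 1)).sup τ with ha_def
  have ha : Monotone a := fun i j h =>
    Finset.sup_mono (Finset.range_subset_range.mpr (by omega))
  have hτa : ∀ n, τ n ≤ a n := fun n =>
    Finset.le_sup (Finset.self_mem_range_succ n)
  set L : ℝ≥0 → ℝ≥0 := interpL a with hL_def
  have hL1 : ∀ r, 1 ≤ L r := interpL_one_le a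
  set β : ℝ≥0 → ℝ≥0 → ℝ≥0 := fun r t => 2 * (σ r + r) * (L r * (L r + t)⁻¹) with hβ_def
  have hKL : ClassKL β :=
    classKL_construct σ hσ L (interpL_continuous a) (interpL_monotone a) hL1
  have hmain : ∀ (x : X), ∀ d ∈ S.Dist, ∀ t : ℝ≥0, dA A (S.φ t x d) ≤ β (dA A x) t + c := by
    intro x d hd t
    set r : ℝ≥0 := dA A x with hr_def
    rcases le_total t (L r) with htL | htL
    · calc dA A (S.φ t x d) ≤ σ r + c := hbound x d hd t
        _ ≤ β r t + c := add_le_add_left (beta_ge_sigma σ L hL1 htL) c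
    · have hτm : τ ⌈r⌉₊ ≤ t := le_trans (hτa _) (le_trans (interpL_ge a ha r) htL)
      have hxr : dA A x ≤ ((⌈r⌉₊ : ℕ) : ℝ≥0) + 1 :=
        le_trans (Nat.le_ceil r) le_self_add
      calc dA A (S.φ t x d) ≤ c := hτ ⌈r⌉₊ x hxr d hd t hτm
        _ ≤ β r t + c := le_add_self.trans (by rw [add_comm])
  have hp : S.PUGASSet A := ⟨β, hKL, c, hc, hmain⟩
  exact ⟨hp, ⟨A, hA, hAb, hp⟩⟩
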